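/- Let H be a real Hilbert space and let f_1,…,f_k : H → ℝ each be locally Lipschitz near x ∈ H. If x is locally weakly Pareto optimal for (f_1,…,f_k), then 0 ∈ F_ε(x) for every ε ≥ 0. -/

import Mathlib

open Filter Topology RealInnerProductSpace

/-- Clarke generalized directional derivative
`f°(x;v) = limsup_{y→x, t↓0} (f(y+tv) − f(y))/t`. -/
noncomputable def clarkeDir {H : Type*} [NormedAddCommGroup H] [InnerProductSpace ℝ H]
    (f : H → ℝ) (x v : H) : ℝ :=
  limsup (fun p : H × ℝ => (f (p.1 + p.2 • v) - f p.1) / p.2)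
    ((𝓝 x) ×ˢ (𝓝[>] (0 : ℝ)))

/-- Clarke subdifferential, with the dual of `H` identified with `H` via the Riesz map:
`∂f(x) = {w : ⟪w, v⟫ ≤ f°(x;v) for all v}`. -/
def clarkeSubdiff {H : Type*} [NormedAddCommGroup H] [InnerProductSpace ℝ H]
    (f : H → ℝ) (x : H) : Set H :=
  {w : H | ∀ v : H, ⟪w, v⟫ ≤ clarkeDir f x v}

/-- Goldstein ε-subdifferential
`∂_ε f(x) = closure (convexHull (⋃_{y ∈ closedBall x ε} ∂f(y)))`. -/
def goldsteinSubdiff {H : Type*} [NormedAddCommGroup H] [InnerProductSpace ℝ H]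
    (f : H → ℝ) (ε : ℝ) (x : H) : Set H :=
  closure (convexHull ℝ (⋃ y ∈ Metric.closedBall x ε, clarkeSubdiff f y))

/-- `f` is locally Lipschitz near `x`: Lipschitz on some open ball around `x`. -/
def LocallyLipschitzNear {H : Type*} [NormedAddCommGroup H]
    (f : H → ℝ) (x : H) : Prop :=
  ∃ ε > 0, ∃ L : NNReal, LipschitzOnWith L f (Metric.ball x ε)

/-- Multiobjective ε-subdifferential `F_ε(x) = closure (convexHull (⋃ i, ∂_ε f_i(x)))`. -/
def multiSubdiff {H : Type*} [NormedAddCommGroup H] [InnerProductSpace ℝ H]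
    {k : ℕ} (f : Fin k → H → ℝ) (ε : ℝ) (x : H) : Set H :=
  closure (convexHull ℝ (⋃ i : Fin k, goldsteinSubdiff (f i) ε x))

/-- The weak topology on `H`: the topology induced by the functionals `⟪·, v⟫`, `v : H`. -/
noncomputable def weakTopology (H : Type*) [NormedAddCommGroup H] [InnerProductSpace ℝ H] :
    TopologicalSpace H :=
  ⨅ v : H, TopologicalSpace.induced (fun x : H => ⟪x, v⟫) inferInstance

section Aux

variable {H : Type*} [NormedAddCommGroup H] [InnerProductSpace ℝ H]

/-- Difference quotient. -/
private noncomputable def dq (f : H → ℝ) (v : H) (p : H × ℝ) : ℝ := (f (p.1 + p.2 • v) - f p.1) / p.2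

private lemma clarkeDir_eq (f : H → ℝ) (x v : H) :
    clarkeDir f x v = limsup (dq f v) ((𝓝 x) ×ˢ (𝓝[>] (0 : ℝ))) := rfl

/-- A uniform bound on difference quotients from local Lipschitzness. -/
private lemma exists_bound {f : H → ℝ} {x : H} (hlip : LocallyLipschitzNear f x) :
    ∃ C : ℝ, 0 ≤ C ∧ ∀ v : H, ∀ᶠ p in (𝓝 x) ×ˢ (𝓝[>] (0 : ℝ)), |dq f v p| ≤ C * ‖v‖ := by
  obtain ⟨δ, hδ, L, hL⟩ := hlip
  refine ⟨L, L.coe_nonneg, fun v => ?_⟩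
  have hball : Metric.ball x (δ / 2) ∈ 𝓝 x := Metric.ball_mem_nhds x (by linarith)
  have hr : (0 : ℝ) < δ / (2 * (‖v‖ + 1)) := by
    apply div_pos hδ
    positivity
  have hIoo : Set.Ioo (0 : ℝ) (δ / (2 * (‖v‖ + 1))) ∈ 𝓝[>] (0 : ℝ) :=
    Ioo_mem_nhdsGT_of_mem ⟨le_refl _, hr⟩
  filter_upwards [Filter.prod_mem_prod hball hIoo] with p hp
  obtain ⟨hp1, hp2⟩ := hp
  set y := p.1; set t := p.2
  have ht0 : 0 < t := hp2.1
  have hv1 : (0 : ℝ) < ‖v‖ + 1 := by positivity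
  have htv : t * ‖v‖ < δ / 2 := by
    have h1 : t * (‖v‖ + 1) < δ / (2 * (‖v‖ + 1)) * (‖v‖ + 1) := by
      exact mul_lt_mul_of_pos_right hp2.2 hv1
    have h2 : δ / (2 * (‖v‖ + 1)) * (‖v‖ + 1) = δ / 2 := by
      field_simp
    nlinarith [norm_nonneg v]
  have hy : y ∈ Metric.ball x δ := by
    have := Metric.mem_ball.1 hp1
    exact Metric.mem_ball.2 (by linarith)
  have hyt : y + t • v ∈ Metric.ball x δ := by
    rw [Metric.mem_ball, dist_eq_norm]
    have : y + t • v - x = (y - x) + t • v := by abel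
    rw [this]
    calc ‖(y - x) + t • v‖ ≤ ‖y - x‖ + ‖t • v‖ := norm_add_le _ _
      _ = ‖y - x‖ + t * ‖v‖ := by rw [norm_smul, Real.norm_eq_abs, abs_of_pos ht0]
      _ < δ / 2 + δ / 2 := by
          have := Metric.mem_ball.1 hp1
          rw [dist_eq_norm] at this
          linarith
      _ = δ := by ring
  have hd : dist (f (y + t • v)) (f y) ≤ (L : ℝ) * dist (y + t • v) y :=
    hL.dist_le_mul _ hyt _ hy
  have hdist : dist (y + t • v) y = t * ‖v‖ := by
    rw [dist_eq_norm]
    have : y + t • v - y = t • v := by abel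
    rw [this, norm_smul, Real.norm_eq_abs, abs_of_pos ht0]
  rw [Real.dist_eq, hdist] at hd
  have : |dq f v p| = |f (y + t • v) - f y| / t := by
    rw [dq, abs_div, abs_of_pos ht0]
  rw [this, div_le_iff₀ ht0]
  calc |f (y + t • v) - f y| ≤ (L : ℝ) * (t * ‖v‖) := hd
    _ = (L : ℝ) * ‖v‖ * t := by ring

private lemma dq_bddAbove {f : H → ℝ} {x : H} {C : ℝ} {v : H}
    (hC : ∀ᶠ p in (𝓝 x) ×ˢ (𝓝[>] (0 : ℝ)), |dq f v p| ≤ C * ‖v‖) :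
    IsBoundedUnder (· ≤ ·) ((𝓝 x) ×ˢ (𝓝[>] (0 : ℝ))) (dq f v) :=
  ⟨C * ‖v‖, eventually_map.2 (hC.mono fun _ hp => (abs_le.1 hp).2)⟩

private lemma dq_cobdd {f : H → ℝ} {x : H} {C : ℝ} {v : H}
    (hC : ∀ᶠ p in (𝓝 x) ×ˢ (𝓝[>] (0 : ℝ)), |dq f v p| ≤ C * ‖v‖) :
    IsCoboundedUnder (· ≤ ·) ((𝓝 x) ×ˢ (𝓝[>] (0 : ℝ))) (dq f v) :=
  Filter.isCoboundedUnder_le_of_eventually_le _ (hC.mono fun _ hp => (abs_le.1 hp).1)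

private lemma clarkeDir_zero {f : H → ℝ} (x : H) : clarkeDir f x (0 : H) = 0 := by
  rw [clarkeDir_eq]
  have : dq f (0 : H) = fun _ => (0 : ℝ) := by
    funext p; simp [dq]
  rw [this, limsup_const]

private lemma clarkeDir_le_bound {f : H → ℝ} {x : H} {C : ℝ} {v : H}
    (hC : ∀ᶠ p in (𝓝 x) ×ˢ (𝓝[>] (0 : ℝ)), |dq f v p| ≤ C * ‖v‖) :
    clarkeDir f x v ≤ C * ‖v‖ := by
  rw [clarkeDir_eq]
  exact limsup_le_of_le (dq_cobdd hC) (hC.mono fun _ hp => (abs_le.1 hp).2)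

private lemma clarkeDir_smul_le {f : H → ℝ} {x : H}
    (hlip : LocallyLipschitzNear f x) {c : ℝ} (hc : 0 < c) (v : H) :
    clarkeDir f x (c • v) ≤ c * clarkeDir f x v := by
  obtain ⟨C, _, hC⟩ := exists_bound hlip
  apply le_of_forall_pos_le_add
  intro ε hε
  have hψ : Tendsto (fun p : H × ℝ => (p.1, c * p.2)) ((𝓝 x) ×ˢ (𝓝[>] (0 : ℝ)))
      ((𝓝 x) ×ˢ (𝓝[>] (0 : ℝ))) := by
    apply Filter.Tendsto.prodMk tendsto_fst
    apply tendsto_nhdsWithin_of_tendsto_nhds_of_eventually_within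
    · have h1 : Tendsto (fun t : ℝ => c * t) (𝓝 0) (𝓝 (c * 0)) :=
        (continuous_const.mul continuous_id).tendsto 0
      rw [mul_zero] at h1
      exact (h1.comp (tendsto_snd.mono_left (Filter.prod_mono le_rfl nhdsWithin_le_nhds)))
    · filter_upwards [Filter.prod_mem_prod Filter.univ_mem
        (self_mem_nhdsWithin : Set.Ioi (0:ℝ) ∈ 𝓝[>] (0:ℝ))] with p hp
      exact mul_pos hc hp.2
  have hlt : clarkeDir f x v < clarkeDir f x v + ε / c := by
    have : 0 < ε / c := div_pos hε hc
    linarith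
  have hev : ∀ᶠ p in (𝓝 x) ×ˢ (𝓝[>] (0 : ℝ)), dq f v p < clarkeDir f x v + ε / c := by
    rw [clarkeDir_eq] at hlt ⊢
    exact eventually_lt_of_limsup_lt hlt (dq_bddAbove (hC v))
  have hev2 : ∀ᶠ p in (𝓝 x) ×ˢ (𝓝[>] (0 : ℝ)),
      dq f v ((fun p : H × ℝ => (p.1, c * p.2)) p) < clarkeDir f x v + ε / c :=
    hψ.eventually hev
  rw [clarkeDir_eq]
  apply limsup_le_of_le (dq_cobdd (hC (c • v)))
  filter_upwards [hev2] with p hp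
  have hkey : dq f (c • v) p = c * dq f v (p.1, c * p.2) := by
    simp only [dq]
    rw [smul_smul, mul_comm p.2 c, ← mul_div_assoc, mul_div_mul_left _ _ (ne_of_gt hc)]
  rw [hkey]
  have := mul_le_mul_of_nonneg_left hp.le hc.le
  calc c * dq f v (p.1, c * p.2) ≤ c * (clarkeDir f x v + ε / c) := this
    _ = c * clarkeDir f x v + ε := by field_simp

private lemma clarkeDir_smul {f : H → ℝ} {x : H}
    (hlip : LocallyLipschitzNear f x) {c : ℝ} (hc : 0 < c) (v : H) :
    clarkeDir f x (c • v) = c * clarkeDir f x v := by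
  refine le_antisymm (clarkeDir_smul_le hlip hc v) ?_
  have h := clarkeDir_smul_le hlip (inv_pos.2 hc) (c • v)
  rw [inv_smul_smul₀ (ne_of_gt hc)] at h
  have := mul_le_mul_of_nonneg_left h hc.le
  calc c * clarkeDir f x v ≤ c * (c⁻¹ * clarkeDir f x (c • v)) := this
    _ = clarkeDir f x (c • v) := by field_simp

private lemma clarkeDir_add_le {f : H → ℝ} {x : H}
    (hlip : LocallyLipschitzNear f x) (u v : H) :
    clarkeDir f x (u + v) ≤ clarkeDir f x u + clarkeDir f x v := by
  obtain ⟨C, _, hC⟩ := exists_bound hlip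
  apply le_of_forall_pos_le_add
  intro ε hε
  have hψ : Tendsto (fun p : H × ℝ => (p.1 + p.2 • v, p.2)) ((𝓝 x) ×ˢ (𝓝[>] (0 : ℝ)))
      ((𝓝 x) ×ˢ (𝓝[>] (0 : ℝ))) := by
    apply Filter.Tendsto.prodMk
    · have h2 : Tendsto (fun p : H × ℝ => p.2) ((𝓝 x) ×ˢ (𝓝[>] (0 : ℝ))) (𝓝 (0 : ℝ)) :=
        tendsto_snd.mono_left (Filter.prod_mono le_rfl nhdsWithin_le_nhds)
      have h3 : Tendsto (fun p : H × ℝ => p.2 • v) ((𝓝 x) ×ˢ (𝓝[>] (0 : ℝ)))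
          (𝓝 ((0:ℝ) • v)) := h2.smul_const v
      rw [zero_smul] at h3
      have := Filter.Tendsto.add tendsto_fst h3
      rwa [add_zero] at this
    · exact tendsto_snd
  have hevu : ∀ᶠ p in (𝓝 x) ×ˢ (𝓝[>] (0 : ℝ)), dq f u p < clarkeDir f x u + ε / 2 := by
    apply eventually_lt_of_limsup_lt _ (dq_bddAbove (hC u))
    rw [← clarkeDir_eq]; linarith
  have hevv : ∀ᶠ p in (𝓝 x) ×ˢ (𝓝[>] (0 : ℝ)), dq f v p < clarkeDir f x v + ε / 2 := by
    apply eventually_lt_of_limsup_lt _ (dq_bddAbove (hC v))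
    rw [← clarkeDir_eq]; linarith
  have hevu2 : ∀ᶠ p in (𝓝 x) ×ˢ (𝓝[>] (0 : ℝ)),
      dq f u ((fun p : H × ℝ => (p.1 + p.2 • v, p.2)) p) < clarkeDir f x u + ε / 2 :=
    hψ.eventually hevu
  rw [clarkeDir_eq]
  apply limsup_le_of_le (dq_cobdd (hC (u + v)))
  filter_upwards [hevu2, hevv] with p hp1 hp2
  have hkey : dq f (u + v) p = dq f u (p.1 + p.2 • v, p.2) + dq f v p := by
    simp only [dq]
    rw [← add_div]
    congr 1
    have h1 : p.1 + p.2 • (u + v) = p.1 + p.2 • v + p.2 • u := by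
      rw [smul_add]; abel
    rw [h1]
    abel
  rw [hkey]
  linarith

/-- Existence of a Clarke subgradient attaining the directional derivative. -/
private lemma exists_clarke_attain {f : H → ℝ} {x : H} [CompleteSpace H]
    (hlip : LocallyLipschitzNear f x) (v : H) :
    ∃ w ∈ clarkeSubdiff f x, ⟪w, v⟫ = clarkeDir f x v := by
  obtain ⟨C, hC0, hC⟩ := exists_bound hlip
  set N : H → ℝ := clarkeDir f x with hN
  have hNle : ∀ u, N u ≤ C * ‖u‖ := fun u => clarkeDir_le_bound (hC u)
  have hN0 : N 0 = 0 := clarkeDir_zero x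
  have hhom : ∀ c : ℝ, 0 < c → ∀ u : H, N (c • u) = c * N u := fun c hc u =>
    clarkeDir_smul hlip hc u
  have hadd : ∀ u w : H, N (u + w) ≤ N u + N w := fun u w => clarkeDir_add_le hlip u w
  have hnegkey : ∀ u : H, 0 ≤ N u + N (-u) := by
    intro u
    have h0 : N (u + -u) = 0 := by rw [add_neg_cancel]; exact hN0
    linarith [hadd u (-u), h0]
  -- the main construction, for a nonzero direction
  have main : ∀ v0 : H, v0 ≠ 0 → ∃ w ∈ clarkeSubdiff f x, ⟪w, v0⟫ = N v0 := by
    intro v0 hv0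
    have hfle : ∀ z : (LinearPMap.mkSpanSingleton (K := ℝ) (σ := RingHom.id ℝ) v0 (N v0) hv0).domain,
        (LinearPMap.mkSpanSingleton (K := ℝ) (σ := RingHom.id ℝ) v0 (N v0) hv0) z ≤ N z := by
      rintro ⟨z, hz⟩
      obtain ⟨c, rfl⟩ := Submodule.mem_span_singleton.1 hz
      have happ : (LinearPMap.mkSpanSingleton (K := ℝ) (σ := RingHom.id ℝ) v0 (N v0) hv0) ⟨c • v0, hz⟩
          = c * N v0 := by
        have := LinearPMap.mkSpanSingleton'_apply (R := ℝ) (σ := RingHom.id ℝ) v0 (N v0)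
          (fun c hc => (smul_eq_zero.1 hc).elim (fun hc => by rw [hc, RingHom.map_zero, zero_smul])
            fun hx' => absurd hx' hv0) c hz
        simpa [smul_eq_mul] using this
      rw [happ]
      rcases lt_trichotomy c 0 with hc | hc | hc
      · have h1 : N (c • v0) = (-c) * N (-v0) := by
          have h2 : c • v0 = (-c) • (-v0) := by simp
          rw [h2, hhom (-c) (by linarith) (-v0)]
        simp only [Submodule.coe_mk]
        rw [h1]
        nlinarith [hnegkey v0]
      · subst hc; simp [hN0]
      · simp only [Submodule.coe_mk]
        rw [hhom c hc v0]
    obtain ⟨g, hg1, hg2⟩ := exists_extension_of_le_sublinear _ N hhom hadd hfle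
    have hgbound : ∀ u : H, ‖g u‖ ≤ C * ‖u‖ := by
      intro u
      rw [Real.norm_eq_abs, abs_le]
      constructor
      · have h1 : g (-u) ≤ N (-u) := hg2 (-u)
        have h2 : N (-u) ≤ C * ‖-u‖ := hNle (-u)
        rw [norm_neg] at h2
        rw [map_neg] at h1
        linarith
      · exact (hg2 u).trans (hNle u)
    have hinner : ∀ u : H,
        ⟪((InnerProductSpace.toDual ℝ H).symm (LinearMap.mkContinuous g C hgbound) : H), u⟫
          = g u := fun u => InnerProductSpace.toDual_symm_apply
    refine ⟨(InnerProductSpace.toDual ℝ H).symm (LinearMap.mkContinuous g C hgbound),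
      fun u => ?_, ?_⟩
    · rw [hinner u]; exact hg2 u
    · rw [hinner v0]
      have hv0mem : v0 ∈ (LinearPMap.mkSpanSingleton (K := ℝ) (σ := RingHom.id ℝ) v0 (N v0) hv0).domain :=
        Submodule.mem_span_singleton_self v0
      have hval : g v0 = (LinearPMap.mkSpanSingleton (K := ℝ) (σ := RingHom.id ℝ) v0 (N v0) hv0) ⟨v0, hv0mem⟩ :=
        hg1 ⟨v0, hv0mem⟩
      rw [hval, LinearPMap.mkSpanSingleton_apply]
  by_cases hv : v = 0
  · subst hv
    by_cases hH : ∃ v0 : H, v0 ≠ 0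
    · obtain ⟨v0, hv0⟩ := hH
      obtain ⟨w, hw, -⟩ := main v0 hv0
      exact ⟨w, hw, by simp [hN0.symm, inner_zero_right, clarkeDir_zero]⟩
    · push_neg at hH
      refine ⟨0, fun u => ?_, by simpa using hN0.symm⟩
      rw [hH u]
      simp [clarkeDir_zero]
  · exact main v hv

/-- Weak Pareto optimality implies nonnegativity of some directional derivative. -/
private lemma exists_nonneg_dir {k : ℕ} {f : Fin k → H → ℝ} {x : H}
    (hlip : ∀ i, LocallyLipschitzNear (f i) x) {δ : ℝ} (hδ : 0 < δ)
    (hp : ¬ ∃ x' : H, ‖x' - x‖ < δ ∧ ∀ i, f i x' < f i x) (v : H) :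
    ∃ i, 0 ≤ clarkeDir (f i) x v := by
  by_contra hcon
  push_neg at hcon
  have hev : ∀ i, ∀ᶠ p in (𝓝 x) ×ˢ (𝓝[>] (0 : ℝ)), dq (f i) v p < 0 := by
    intro i
    obtain ⟨C, _, hC⟩ := exists_bound (hlip i)
    have := hcon i
    rw [clarkeDir_eq] at this
    exact eventually_lt_of_limsup_lt this (dq_bddAbove (hC v))
  have hall : ∀ᶠ p in (𝓝 x) ×ˢ (𝓝[>] (0 : ℝ)), ∀ i, dq (f i) v p < 0 :=
    eventually_all.2 hev
  have hsl : Tendsto (fun t : ℝ => ((x : H), t)) (𝓝[>] (0 : ℝ))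
      ((𝓝 x) ×ˢ (𝓝[>] (0 : ℝ))) :=
    Filter.Tendsto.prodMk tendsto_const_nhds tendsto_id
  have hall' : ∀ᶠ t in 𝓝[>] (0 : ℝ), ∀ i, dq (f i) v (x, t) < 0 := hsl.eventually hall
  have hsmall : ∀ᶠ t in 𝓝[>] (0 : ℝ), t * ‖v‖ < δ := by
    have htend : Tendsto (fun t : ℝ => t * ‖v‖) (𝓝[>] (0 : ℝ)) (𝓝 0) := by
      have h1 : Tendsto (fun t : ℝ => t * ‖v‖) (𝓝 (0 : ℝ)) (𝓝 (0 * ‖v‖)) :=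
        (continuous_id.mul continuous_const).tendsto 0
      rw [zero_mul] at h1
      exact h1.mono_left nhdsWithin_le_nhds
    exact htend.eventually_lt_const hδ
  have hpos : ∀ᶠ t in 𝓝[>] (0 : ℝ), 0 < t := self_mem_nhdsWithin
  obtain ⟨t, hq, htδ, ht0⟩ := (hall'.and (hsmall.and hpos)).exists
  apply hp
  refine ⟨x + t • v, ?_, fun i => ?_⟩
  · have : x + t • v - x = t • v := by abel
    rw [this, norm_smul, Real.norm_eq_abs, abs_of_pos ht0]
    exact htδ
  · have h := hq i
    simp only [dq] at h
    have hnum : f i (x + t • v) - f i x < 0 := by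
      by_contra hge
      push_neg at hge
      have := div_nonneg hge ht0.le
      linarith
    linarith

end Aux

/-- If `x` is locally weakly Pareto optimal, then `0 ∈ F_ε(x)` for every `ε ≥ 0`. -/
theorem stmt10 {H : Type*} [NormedAddCommGroup H] [InnerProductSpace ℝ H] [CompleteSpace H]
    {k : ℕ} (f : Fin k → H → ℝ) (x : H)
    (hlip : ∀ i, LocallyLipschitzNear (f i) x)
    (hpareto : ∃ δ > 0, ¬ ∃ x' : H, ‖x' - x‖ < δ ∧ ∀ i, f i x' < f i x) :
    ∀ ε : ℝ, 0 ≤ ε → (0 : H) ∈ multiSubdiff f ε x := by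
  intro ε hε
  obtain ⟨δ, hδ, hp⟩ := hpareto
  set K : Set H := closure (convexHull ℝ (⋃ i : Fin k, clarkeSubdiff (f i) x)) with hK
  have hsub : K ⊆ multiSubdiff f ε x := by
    apply closure_mono
    apply convexHull_mono
    apply Set.iUnion_mono
    intro i w hw
    exact subset_closure (subset_convexHull ℝ _
      (Set.mem_biUnion (Metric.mem_closedBall_self hε) hw))
  suffices h0 : (0 : H) ∈ K from hsub h0
  by_contra h0
  obtain ⟨φ, u, hKu, hu0⟩ :=
    geometric_hahn_banach_closed_point ((convex_convexHull ℝ _).closure) isClosed_closure h0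
  have hu : u < 0 := by simpa using hu0
  set v : H := (InnerProductSpace.toDual ℝ H).symm φ with hv
  obtain ⟨i, hi⟩ := exists_nonneg_dir hlip hδ hp v
  obtain ⟨w, hwmem, hwv⟩ := exists_clarke_attain (hlip i) v
  have hwK : w ∈ K := subset_closure (subset_convexHull ℝ _ (Set.mem_iUnion.2 ⟨i, hwmem⟩))
  have h1 : φ w < u := hKu w hwK
  have h2 : φ w = ⟪w, v⟫ := by
    rw [hv, real_inner_comm, InnerProductSpace.toDual_symm_apply]
  rw [h2, hwv] at h1
  linarith
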